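/- Let n be an even positive integer and let h, k be nonnegative integers. Then, in ℤ[q], D_q(h+n, k+n) ≡ D_q(h+n, k) + D_q(h, k+n) − D_q(h, k) (mod Φ_n(q)). -/

import Mathlib

open Polynomial Finset

/-- The Gaussian (q-)binomial coefficient `[h choose k]_q` as a polynomial in `ℤ[q]`,
defined via the q-Pascal recurrence; it equals
`([h]_q [h−1]_q ⋯ [h−k+1]_q)/([k]_q ⋯ [1]_q)`. -/
noncomputable def qBinom : ℕ → ℕ → Polynomial ℤ
  | _, 0 => 1
  | 0, _ + 1 => 0
  | h + 1, k + 1 => qBinom h k + Polynomial.X ^ (k + 1) * qBinom h (k + 1)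

/-- The q-Delannoy number `D_q(h,k) = Σ_{j=0}^{h} q^{binom(j+1,2)} [k choose j]_q
[h+k−j choose k]_q`. -/
noncomputable def qDelannoy (h k : ℕ) : Polynomial ℤ :=
  ∑ j ∈ Finset.range (h + 1),
    Polynomial.X ^ ((j + 1).choose 2) * qBinom k j * qBinom (h + k - j) k

/-- The Delannoy number `D(h,k) = Σ_{j=0}^{h} binom(k,j) binom(h+k−j,k)`. -/
def delannoy (h k : ℕ) : ℕ :=
  ∑ j ∈ Finset.range (h + 1), k.choose j * (h + k - j).choose k

lemma qBinom_zero_right (h : ℕ) : qBinom h 0 = 1 := by cases h <;> rfl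

lemma qBinom_zero_succ (k : ℕ) : qBinom 0 (k+1) = 0 := rfl

lemma qBinom_succ_succ (h k : ℕ) :
    qBinom (h+1) (k+1) = qBinom h k + Polynomial.X ^ (k+1) * qBinom h (k+1) := rfl

lemma qBinom_eq_zero : ∀ {h k : ℕ}, h < k → qBinom h k = 0 := by
  intro h
  induction h with
  | zero => intro k hk; cases k with
    | zero => omega
    | succ k => rfl
  | succ h ih =>
    intro k hk
    cases k with
    | zero => omega
    | succ k =>
      rw [qBinom_succ_succ, ih (by omega), ih (by omega), mul_zero, add_zero]

lemma qBinom_self : ∀ h : ℕ, qBinom h h = 1 := by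
  intro h
  induction h with
  | zero => rfl
  | succ h ih => rw [qBinom_succ_succ, ih, qBinom_eq_zero (by omega), mul_zero, add_zero]

lemma qBinom_absorb : ∀ h k : ℕ,
    (1 - Polynomial.X ^ (k+1)) * qBinom h (k+1) = (1 - Polynomial.X ^ (h-k)) * qBinom h k := by
  intro h
  induction h with
  | zero =>
    intro k
    rw [qBinom_zero_succ, Nat.zero_sub, pow_zero, sub_self, mul_zero, zero_mul]
  | succ h ih =>
    intro k
    cases k with
    | zero =>
      rw [qBinom_succ_succ, qBinom_zero_right, Nat.sub_zero]
      have h0 := ih 0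
      rw [qBinom_zero_right, mul_one, Nat.sub_zero] at h0
      rw [qBinom_zero_right, mul_one]
      linear_combination Polynomial.X * h0
    | succ k =>
      rw [qBinom_succ_succ, qBinom_succ_succ h k]
      have e1 : h + 1 - (k + 1) = h - k := by omega
      rw [e1]
      rcases le_or_gt (k+1) h with hc | hc
      · obtain ⟨d, rfl⟩ : ∃ d, h = k + 1 + d := ⟨h - (k+1), by omega⟩
        have e2 : k + 1 + d - k = d + 1 := by omega
        have e3 : k + 1 + d - (k + 1) = d := by omega
        have h1 := ih (k+1)
        have h2 := ih k
        rw [e3] at h1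
        rw [e2] at h2
        rw [e2]
        linear_combination Polynomial.X ^ (k+2) * h1 + h2
      · rw [qBinom_eq_zero (show h < k + 1 by omega), qBinom_eq_zero (show h < k + 2 by omega)]
        rcases eq_or_lt_of_le (show h ≤ k by omega) with he | hl
        · rw [← he, Nat.sub_self, pow_zero, sub_self, zero_mul]
          ring
        · rw [qBinom_eq_zero hl]
          ring

lemma qBinom_mul_one_sub (h k : ℕ) :
    (1 - Polynomial.X ^ (k+1)) * qBinom (h+1) (k+1) = (1 - Polynomial.X ^ (h+1)) * qBinom h k := by
  rw [qBinom_succ_succ]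
  rcases le_or_gt k h with hc | hc
  · obtain ⟨d, rfl⟩ : ∃ d, h = k + d := ⟨h - k, by omega⟩
    have h1 := qBinom_absorb (k+d) k
    rw [show k + d - k = d by omega] at h1
    linear_combination Polynomial.X ^ (k+1) * h1
  · rw [qBinom_eq_zero hc, qBinom_eq_zero (show h < k + 1 by omega)]
    ring

lemma cycl_prime {n : ℕ} (hn : 0 < n) : Prime (Polynomial.cyclotomic n ℤ) :=
  UniqueFactorizationMonoid.irreducible_iff_prime.mp (Polynomial.cyclotomic.irreducible hn)

lemma cycl_not_dvd {n m : ℕ} (hm : 0 < m) (hmn : m < n) :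
    ¬ Polynomial.cyclotomic n ℤ ∣ (Polynomial.X ^ m - 1) := by
  intro hdvd
  have hn : 0 < n := lt_trans hm hmn
  have hdvd' : Polynomial.cyclotomic n ℂ ∣ (Polynomial.X ^ m - 1) := by
    have := Polynomial.map_dvd (Int.castRingHom ℂ) hdvd
    simpa [Polynomial.map_cyclotomic] using this
  have hprim := Complex.isPrimitiveRoot_exp n hn.ne'
  have hroot : (Polynomial.X ^ m - 1 : Polynomial ℂ).IsRoot (Complex.exp (2 * Real.pi * Complex.I / n)) :=
    (hprim.isRoot_cyclotomic hn).dvd hdvd'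
  have hpow : Complex.exp (2 * Real.pi * Complex.I / n) ^ m = 1 := by
    have := hroot
    simp [Polynomial.IsRoot, sub_eq_zero] at this
    exact this
  exact absurd (Nat.le_of_dvd hm (hprim.dvd_of_pow_eq_one m hpow)) (by omega)

lemma cycl_dvd_half {n : ℕ} (hn : 0 < n) (heven : Even n) :
    Polynomial.cyclotomic n ℤ ∣ (Polynomial.X ^ (n/2) + 1) := by
  obtain ⟨m, rfl⟩ := heven
  have hm : 0 < m := by omega
  have hfac : (Polynomial.X ^ (m + m) - 1 : Polynomial ℤ)
      = (Polynomial.X ^ m - 1) * (Polynomial.X ^ m + 1) := by ring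
  have hd : Polynomial.cyclotomic (m+m) ℤ ∣ (Polynomial.X ^ m - 1) * (Polynomial.X ^ m + 1) := by
    rw [← hfac]; exact Polynomial.cyclotomic.dvd_X_pow_sub_one (m+m) ℤ
  rcases (cycl_prime hn).2.2 _ _ hd with h1 | h2
  · exact absurd h1 (cycl_not_dvd hm (by omega))
  · rw [show (m + m) / 2 = m by omega]; exact h2

noncomputable def qm (n : ℕ) :
    Polynomial ℤ →+* (Polynomial ℤ ⧸ Ideal.span ({Polynomial.cyclotomic n ℤ} : Set (Polynomial ℤ))) :=
  Ideal.Quotient.mk _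

lemma qm_eq_zero_iff {n : ℕ} (p : Polynomial ℤ) :
    qm n p = 0 ↔ Polynomial.cyclotomic n ℤ ∣ p :=
  Ideal.Quotient.eq_zero_iff_dvd _ _

lemma qm_X_pow_n {n : ℕ} : qm n (Polynomial.X ^ n) = 1 := by
  have h : qm n (Polynomial.X ^ n - 1) = 0 :=
    (qm_eq_zero_iff _).mpr (Polynomial.cyclotomic.dvd_X_pow_sub_one n ℤ)
  rw [map_sub, map_one, sub_eq_zero] at h
  exact h

lemma qm_X_half {n : ℕ} (hn : 0 < n) (heven : Even n) :
    qm n (Polynomial.X ^ (n/2)) = -1 := by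
  have h : qm n (Polynomial.X ^ (n/2) + 1) = 0 :=
    (qm_eq_zero_iff _).mpr (cycl_dvd_half hn heven)
  rw [map_add, map_one, add_eq_zero_iff_eq_neg] at h
  exact h

lemma qm_qBinom_cyc {n b : ℕ} (hb : 0 < b) (hbn : b < n) : qm n (qBinom n b) = 0 := by
  rw [qm_eq_zero_iff]
  obtain ⟨b', rfl⟩ : ∃ b', b = b' + 1 := ⟨b - 1, by omega⟩
  obtain ⟨h', rfl⟩ : ∃ h', n = h' + 1 := ⟨n - 1, by omega⟩
  have key := qBinom_mul_one_sub h' b'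
  have hdvd : Polynomial.cyclotomic (h'+1) ℤ ∣ (1 - Polynomial.X ^ (h'+1)) * qBinom h' b' := by
    apply Dvd.dvd.mul_right
    rw [show (1 - Polynomial.X ^ (h'+1) : Polynomial ℤ) = -(Polynomial.X ^ (h'+1) - 1) by ring]
    exact dvd_neg.mpr (Polynomial.cyclotomic.dvd_X_pow_sub_one (h'+1) ℤ)
  rw [← key] at hdvd
  rcases (cycl_prime (by omega)).2.2 _ _ hdvd with h1 | h2
  · exfalso
    apply cycl_not_dvd (n := h'+1) (m := b'+1) (by omega) hbn
    rw [show (Polynomial.X ^ (b'+1) - 1 : Polynomial ℤ) = -(1 - Polynomial.X ^ (b'+1)) by ring]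
    exact dvd_neg.mpr h1
  · exact h2

lemma qm_qBinom_shift (n : ℕ) (hn : 0 < n) (a : ℕ) : ∀ b : ℕ,
    qm n (qBinom (a + n) b) =
      qm n (qBinom a b) + if n ≤ b then qm n (qBinom a (b - n)) else 0 := by
  induction a with
  | zero =>
    intro b
    rcases Nat.eq_zero_or_pos b with rfl | hb
    · rw [if_neg (by omega), qBinom_zero_right, qBinom_zero_right, add_zero]
    rcases lt_trichotomy b n with hbn | rfl | hbn
    · rw [zero_add, qm_qBinom_cyc hb hbn, if_neg (by omega), add_zero]
      obtain ⟨b', rfl⟩ : ∃ b', b = b' + 1 := ⟨b - 1, by omega⟩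
      rw [qBinom_zero_succ, map_zero]
    · rw [zero_add, qBinom_self, if_pos le_rfl, Nat.sub_self, qBinom_zero_right]
      obtain ⟨b', rfl⟩ : ∃ b', b = b' + 1 := ⟨b - 1, by omega⟩
      rw [qBinom_zero_succ, map_zero, zero_add]
    · rw [zero_add, qBinom_eq_zero hbn, if_pos (by omega)]
      obtain ⟨b', rfl⟩ : ∃ b', b = b' + 1 := ⟨b - 1, by omega⟩
      obtain ⟨c', hc'⟩ : ∃ c', b' + 1 - n = c' + 1 := ⟨b' - n, by omega⟩
      rw [hc', qBinom_zero_succ, qBinom_zero_succ]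
      simp
  | succ a ih =>
    intro b
    rcases b with _ | b'
    · rw [if_neg (by omega), qBinom_zero_right, qBinom_zero_right, add_zero]
    have key : qBinom (a + 1 + n) (b' + 1)
        = qBinom (a + n) b' + Polynomial.X ^ (b'+1) * qBinom (a+n) (b'+1) := by
      rw [show a + 1 + n = (a + n) + 1 by omega, qBinom_succ_succ]
    rw [key, map_add, map_mul, ih b', ih (b'+1), qBinom_succ_succ, map_add, map_mul]
    rcases lt_trichotomy (b'+1) n with hc | hc | hc
    · rw [if_neg (by omega), if_neg (by omega), if_neg (by omega)]
      ring
    · rw [if_neg (by omega), if_pos (by omega), if_pos (by omega)]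
      rw [show b' + 1 - n = 0 by omega, qBinom_zero_right, qBinom_zero_right, map_one]
      rw [show (Polynomial.X : Polynomial ℤ) ^ (b'+1) = Polynomial.X ^ n by rw [hc]]
      rw [qm_X_pow_n]
      ring
    · rw [if_pos (by omega), if_pos (by omega), if_pos (by omega)]
      rw [show b' + 1 - n = (b' - n) + 1 by omega, qBinom_succ_succ, map_add, map_mul]
      have hx : qm n ((Polynomial.X : Polynomial ℤ) ^ (b'+1)) = qm n (Polynomial.X ^ (b' - n + 1)) := by
        rw [show b' + 1 = (b' - n + 1) + n by omega, pow_add, map_mul, qm_X_pow_n, mul_one]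
      rw [hx]
      ring

lemma choose_two_add (a b : ℕ) :
    (a + b + 1).choose 2 = (a+1).choose 2 + (b+1).choose 2 + a * b := by
  induction b with
  | zero => simp
  | succ b ih =>
    have h1 : (a + (b+1) + 1).choose 2 = (a + b + 1).choose 1 + (a + b + 1).choose 2 := by
      rw [show a + (b+1) + 1 = (a + b + 1) + 1 by omega]
      exact Nat.choose_succ_succ' (a+b+1) 1
    have h2 : (b + 1 + 1).choose 2 = (b+1).choose 1 + (b+1).choose 2 :=
      Nat.choose_succ_succ' (b+1) 1
    rw [Nat.choose_one_right] at h1 h2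
    have h3 : a * (b+1) = a * b + a := by ring
    omega

lemma qm_c_shift {n : ℕ} (hn : 0 < n) (heven : Even n) (i : ℕ) :
    qm n (Polynomial.X ^ ((i + n + 1).choose 2)) = - qm n (Polynomial.X ^ ((i+1).choose 2)) := by
  obtain ⟨m, hm⟩ := heven
  have hexp : (i + n + 1).choose 2 = (i+1).choose 2 + n * i + m * (n + 1) := by
    have := choose_two_add i n
    have h2 : (n+1).choose 2 = m * (n + 1) := by
      rw [Nat.choose_two_right]
      rw [show n + 1 - 1 = n by omega]
      rw [show (n+1) * n = (m * (n+1)) * 2 by rw [hm]; ring]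
      omega
    have h4 : n * i = i * n := Nat.mul_comm n i
    omega
  rw [hexp]
  have hsplit : (Polynomial.X : Polynomial ℤ) ^ ((i+1).choose 2 + n * i + m * (n+1))
      = Polynomial.X ^ ((i+1).choose 2) * (Polynomial.X ^ n) ^ i * (Polynomial.X ^ m) ^ (n+1) := by
    rw [pow_add, pow_add, ← pow_mul, ← pow_mul]
  rw [hsplit, map_mul, map_mul, map_pow (qm n) (Polynomial.X ^ n) i, qm_X_pow_n, one_pow,
    map_pow (qm n) (Polynomial.X ^ m) (n+1), show m = n / 2 by omega, qm_X_half hn ⟨m, hm⟩]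
  rw [show n + 1 = 2 * m + 1 by omega, pow_succ, pow_mul]
  norm_num
  ring

noncomputable def qE (n h k : ℕ) : Polynomial ℤ :=
  ∑ j ∈ Finset.range (h + n + 1),
    Polynomial.X ^ ((j + 1).choose 2) * qBinom k j * qBinom (h + k - j) (k - n)

lemma qDelannoy_ext (h k d : ℕ) :
    ∑ j ∈ Finset.range (h + d + 1),
      Polynomial.X ^ ((j+1).choose 2) * qBinom k j * qBinom (h + k - j) k
      = qDelannoy h k := by
  rw [qDelannoy]
  symm
  apply Finset.sum_subset
  · exact Finset.range_subset_range.mpr (by omega)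
  · intro j hj hnj
    simp only [Finset.mem_range] at hj hnj
    rcases le_or_gt j k with hjk | hjk
    · rw [qBinom_eq_zero (show h + k - j < k by omega), mul_zero]
    · rw [qBinom_eq_zero hjk, mul_zero, zero_mul]

lemma sum_shift {M : Type*} [AddCommMonoid M] (n N : ℕ) (g : ℕ → M) :
    ∑ j ∈ Finset.range (N + n), (if n ≤ j then g j else 0) = ∑ i ∈ Finset.range N, g (i + n) := by
  rw [Finset.range_eq_Ico, ← Finset.sum_Ico_consecutive _ (Nat.zero_le n) (Nat.le_add_left n N)]
  have h1 : ∑ j ∈ Finset.Ico 0 n, (if n ≤ j then g j else 0) = 0 :=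
    Finset.sum_eq_zero fun j hj => if_neg (by simp only [Finset.mem_Ico] at hj; omega)
  rw [h1, zero_add, Finset.sum_Ico_eq_sum_range]
  rw [show N + n - n = N by omega]
  apply Finset.sum_congr rfl
  intro i _
  rw [if_pos (by omega), Nat.add_comm n i]

lemma qm_qDelannoy_step (n : ℕ) (hn : 0 < n) (h k : ℕ) :
    qm n (qDelannoy (h+n) k)
      = qm n (qDelannoy h k) + if n ≤ k then qm n (qE n h k) else 0 := by
  have hD : qDelannoy (h+n) k = ∑ j ∈ Finset.range (h+n+1),
      Polynomial.X ^ ((j+1).choose 2) * qBinom k j * qBinom (h + n + k - j) k := rfl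
  rw [hD, map_sum]
  by_cases hnk : n ≤ k
  · rw [if_pos hnk]
    have step : ∀ j ∈ Finset.range (h+n+1),
        qm n (Polynomial.X ^ ((j+1).choose 2) * qBinom k j * qBinom (h+n+k-j) k)
        = qm n (Polynomial.X ^ ((j+1).choose 2) * qBinom k j * qBinom (h+k-j) k)
          + qm n (Polynomial.X ^ ((j+1).choose 2) * qBinom k j * qBinom (h+k-j) (k-n)) := by
      intro j hj
      rcases le_or_gt j k with hjk | hjk
      · rw [show h + n + k - j = (h + k - j) + n by omega]
        rw [map_mul, map_mul, map_mul, map_mul, map_mul, map_mul,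
          qm_qBinom_shift n hn (h+k-j) k, if_pos hnk]
        ring
      · rw [qBinom_eq_zero hjk]
        simp
    rw [Finset.sum_congr rfl step, Finset.sum_add_distrib, ← map_sum, ← map_sum,
      qDelannoy_ext h k n]
    rfl
  · rw [if_neg hnk, add_zero]
    have step : ∀ j ∈ Finset.range (h+n+1),
        qm n (Polynomial.X ^ ((j+1).choose 2) * qBinom k j * qBinom (h+n+k-j) k)
        = qm n (Polynomial.X ^ ((j+1).choose 2) * qBinom k j * qBinom (h+k-j) k) := by
      intro j hj
      rcases le_or_gt j k with hjk | hjk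
      · rw [show h + n + k - j = (h + k - j) + n by omega]
        rw [map_mul, map_mul, map_mul, map_mul,
          qm_qBinom_shift n hn (h+k-j) k, if_neg hnk, add_zero]
      · rw [qBinom_eq_zero hjk]
        simp
    rw [Finset.sum_congr rfl step, ← map_sum, qDelannoy_ext h k n]

lemma qm_qE_shift (n : ℕ) (hn : 0 < n) (heven : Even n) (h k : ℕ) :
    qm n (qE n h (k+n)) = if n ≤ k then qm n (qE n h k) else 0 := by
  have hE : qE n h (k+n) = ∑ j ∈ Finset.range (h+n+1),
      Polynomial.X ^ ((j+1).choose 2) * qBinom (k+n) j * qBinom (h + k + n - j) k := by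
    rw [qE]
    apply Finset.sum_congr rfl
    intro j _
    rw [show k + n - n = k by omega, show h + (k+n) - j = h + k + n - j by omega]
  rw [hE, map_sum]
  have stepA : ∀ j ∈ Finset.range (h+n+1),
      qm n (Polynomial.X ^ ((j+1).choose 2) * qBinom (k+n) j * qBinom (h+k+n-j) k)
      = qm n (Polynomial.X ^ ((j+1).choose 2)) * qm n (qBinom k j) * qm n (qBinom (h+k+n-j) k)
        + (if n ≤ j then
            qm n (Polynomial.X ^ ((j+1).choose 2)) * qm n (qBinom k (j-n)) * qm n (qBinom (h+k+n-j) k)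
          else 0) := by
    intro j _
    rw [map_mul, map_mul, qm_qBinom_shift n hn k j]
    by_cases hnj : n ≤ j
    · rw [if_pos hnj, if_pos hnj]; ring
    · rw [if_neg hnj, if_neg hnj]; ring
  rw [Finset.sum_congr rfl stepA, Finset.sum_add_distrib]
  have hS2 : ∑ j ∈ Finset.range (h+n+1),
      (if n ≤ j then
        qm n (Polynomial.X ^ ((j+1).choose 2)) * qm n (qBinom k (j-n)) * qm n (qBinom (h+k+n-j) k)
      else 0) = - qm n (qDelannoy h k) := by
    rw [show h + n + 1 = (h+1) + n by omega, sum_shift]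
    have : ∀ i ∈ Finset.range (h+1),
        qm n (Polynomial.X ^ ((i+n+1).choose 2)) * qm n (qBinom k (i+n-n)) * qm n (qBinom (h+k+n-(i+n)) k)
        = - qm n (Polynomial.X ^ ((i+1).choose 2) * qBinom k i * qBinom (h+k-i) k) := by
      intro i hi
      simp only [Finset.mem_range] at hi
      rw [show i + n - n = i by omega, show h + k + n - (i+n) = h + k - i by omega,
        qm_c_shift hn heven i, map_mul, map_mul]
      ring
    rw [Finset.sum_congr rfl this, Finset.sum_neg_distrib, ← map_sum]
    rfl
  rw [hS2]
  by_cases hnk : n ≤ k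
  · rw [if_pos hnk]
    have stepB : ∀ j ∈ Finset.range (h+n+1),
        qm n (Polynomial.X ^ ((j+1).choose 2)) * qm n (qBinom k j) * qm n (qBinom (h+k+n-j) k)
        = qm n (Polynomial.X ^ ((j+1).choose 2) * qBinom k j * qBinom (h+k-j) k)
          + qm n (Polynomial.X ^ ((j+1).choose 2) * qBinom k j * qBinom (h+k-j) (k-n)) := by
      intro j _
      rcases le_or_gt j k with hjk | hjk
      · rw [show h + k + n - j = (h + k - j) + n by omega,
          qm_qBinom_shift n hn (h+k-j) k, if_pos hnk, map_mul, map_mul, map_mul, map_mul]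
        ring
      · rw [qBinom_eq_zero hjk]
        simp
    rw [Finset.sum_congr rfl stepB, Finset.sum_add_distrib, ← map_sum, ← map_sum,
      qDelannoy_ext h k n]
    have : (∑ j ∈ Finset.range (h+n+1),
        Polynomial.X ^ ((j+1).choose 2) * qBinom k j * qBinom (h+k-j) (k-n)) = qE n h k := rfl
    rw [this]
    ring
  · rw [if_neg hnk]
    have stepB : ∀ j ∈ Finset.range (h+n+1),
        qm n (Polynomial.X ^ ((j+1).choose 2)) * qm n (qBinom k j) * qm n (qBinom (h+k+n-j) k)
        = qm n (Polynomial.X ^ ((j+1).choose 2) * qBinom k j * qBinom (h+k-j) k) := by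
      intro j _
      rcases le_or_gt j k with hjk | hjk
      · rw [show h + k + n - j = (h + k - j) + n by omega,
          qm_qBinom_shift n hn (h+k-j) k, if_neg hnk, add_zero, map_mul, map_mul]
      · rw [qBinom_eq_zero hjk]
        simp
    rw [Finset.sum_congr rfl stepB, ← map_sum, qDelannoy_ext h k n]
    ring

theorem qDelannoy_step_even (n : ℕ) (hn : 0 < n) (heven : Even n) (h k : ℕ) :
    Polynomial.cyclotomic n ℤ ∣
      qDelannoy (h + n) (k + n) -
        (qDelannoy (h + n) k + qDelannoy h (k + n) - qDelannoy h k) := by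
  rw [← Ideal.Quotient.eq_zero_iff_dvd]
  show qm n (qDelannoy (h+n) (k+n) - (qDelannoy (h+n) k + qDelannoy h (k+n) - qDelannoy h k)) = 0
  rw [map_sub, map_sub, map_add]
  rw [qm_qDelannoy_step n hn h (k+n), qm_qDelannoy_step n hn h k,
    if_pos (show n ≤ k + n by omega), qm_qE_shift n hn heven h k]
  by_cases hnk : n ≤ k
  · rw [if_pos hnk]; ring
  · rw [if_neg hnk]; ring
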